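/- Let f, h : ℝⁿ → (-∞,∞] with h proper lsc convex, h ≤ f on an open convex set W, and suppose [W × Z] ∩ gph ∂h = [W × Z] ∩ gph ∂f with f(w) = h(w) on this common set, where Z is an open convex set. If (w̄, z̄) belongs to this common set and h is strongly convex on W with modulus s, then w̄ is a local minimizer of w ↦ f(w) − ⟨z̄, w⟩ and moreover f(w) − ⟨z̄, w⟩ ≥ f(w̄) − ⟨z̄, w̄⟩ + (s/2)‖w − w̄‖² for all w ∈ W. -/

import Mathlib

open scoped RealInnerProductSpace

/-- The Fréchet (regular) subdifferential of `f : E → (-∞,∞]` at `x`. -/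
def FSubdiff {E : Type*} [NormedAddCommGroup E] [InnerProductSpace ℝ E]
    (f : E → EReal) (x : E) : Set E :=
  {v | ∀ ε > (0 : ℝ), ∀ᶠ h in nhds (0 : E),
    f x + ((⟪v, h⟫ - ε * ‖h‖ : ℝ) : EReal) ≤ f (x + h)}

/-- The convex subdifferential of `h : E → (-∞,∞]` at `x`. -/
def CSubdiff {E : Type*} [NormedAddCommGroup E] [InnerProductSpace ℝ E]
    (h : E → EReal) (x : E) : Set E :=
  {v | ∀ w, h x + ((⟪v, w - x⟫ : ℝ) : EReal) ≤ h w}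

/-- Local growth consequence of variational strong convexity: if a strongly convex
minorant `h` agrees with `f` in graph of subdifferential and in value on `W × Z`, and
`(w̄, z̄)` lies in the common graph, then `w̄` is a local minimizer of `f − ⟨z̄,·⟩` and
`f(w) − ⟨z̄,w⟩ ≥ f(w̄) − ⟨z̄,w̄⟩ + (s/2)‖w − w̄‖²` on `W`. -/
theorem variational_strong_convexity_growth
    {E : Type*} [NormedAddCommGroup E] [InnerProductSpace ℝ E] [FiniteDimensional ℝ E]
    (W Z : Set E) (hWo : IsOpen W) (hWc : Convex ℝ W) (hZo : IsOpen Z) (hZc : Convex ℝ Z)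
    (f h : E → EReal)
    (hproper : ∃ w, h w ≠ ⊤) (hbot : ∀ w, h w ≠ ⊥)
    (hlsc : LowerSemicontinuous h)
    (hconv : ∀ w₁ w₂ : E, ∀ t : ℝ, 0 ≤ t → t ≤ 1 →
      h (t • w₁ + (1 - t) • w₂) ≤ (t : EReal) * h w₁ + ((1 - t : ℝ) : EReal) * h w₂)
    (hle : ∀ w ∈ W, h w ≤ f w)
    (s : ℝ) (hs : 0 < s)
    (hstrong : ∀ w₁ ∈ W, ∀ w₂ ∈ W, ∀ t : ℝ, 0 ≤ t → t ≤ 1 →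
      h (t • w₁ + (1 - t) • w₂) + (((s / 2) * t * (1 - t) * ‖w₁ - w₂‖ ^ 2 : ℝ) : EReal) ≤
        (t : EReal) * h w₁ + ((1 - t : ℝ) : EReal) * h w₂)
    (hgraph : ∀ w ∈ W, ∀ z ∈ Z, (z ∈ CSubdiff h w ↔ z ∈ FSubdiff f w))
    (hval : ∀ w ∈ W, ∀ z ∈ Z, z ∈ FSubdiff f w → f w = h w)
    (wbar zbar : E) (hwbar : wbar ∈ W) (hzbar : zbar ∈ Z)
    (hmem : zbar ∈ FSubdiff f wbar) :
    (∃ U ∈ nhds wbar, ∀ w ∈ U,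
      f wbar - ((⟪zbar, wbar⟫ : ℝ) : EReal) ≤ f w - ((⟪zbar, w⟫ : ℝ) : EReal)) ∧
    (∀ w ∈ W,
      f wbar - ((⟪zbar, wbar⟫ : ℝ) : EReal) + (((s / 2) * ‖w - wbar‖ ^ 2 : ℝ) : EReal) ≤
        f w - ((⟪zbar, w⟫ : ℝ) : EReal)) := by
  
  -- zbar is a convex subgradient of h at wbar
  have hC : zbar ∈ CSubdiff h wbar := (hgraph wbar hwbar zbar hzbar).mpr hmem
  have hfval : f wbar = h wbar := hval wbar hwbar zbar hzbar hmem
  -- h wbar is finite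
  obtain ⟨w0, hw0⟩ := hproper
  have hne_top : h wbar ≠ ⊤ := by
    intro htop
    have := hC w0
    rw [htop, EReal.top_add_coe] at this
    exact hw0 (top_le_iff.mp this)
  set H : ℝ := (h wbar).toReal with hH
  have hHeq : h wbar = (H : EReal) := (EReal.coe_toReal hne_top (hbot wbar)).symm
  -- Key inequality: for all w ∈ W,
  -- H + ⟪zbar, w - wbar⟫ + (s/2)‖w - wbar‖² ≤ h w
  have key : ∀ w ∈ W,
      ((H + ⟪zbar, w - wbar⟫ + (s / 2) * ‖w - wbar‖ ^ 2 : ℝ) : EReal) ≤ h w := by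
    intro w hw
    by_cases htop : h w = ⊤
    · rw [htop]; exact le_top
    set A : ℝ := (h w).toReal with hA
    have hAeq : h w = (A : EReal) := (EReal.coe_toReal htop (hbot w)).symm
    set ip : ℝ := ⟪zbar, w - wbar⟫ with hip
    set d : ℝ := ‖w - wbar‖ ^ 2 with hd
    have hd0 : 0 ≤ d := by positivity
    -- real inequality for each t ∈ (0,1)
    have step : ∀ t ∈ Set.Ioo (0 : ℝ) 1, ip + (s / 2) * (1 - t) * d ≤ A - H := by
      rintro t ⟨ht0, ht1⟩
      set mid : E := t • w + (1 - t) • wbar with hmid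
      have hsub : mid - wbar = t • (w - wbar) := by
        simp [hmid, smul_sub, sub_smul, one_smul]; abel
      have h1 : h wbar + ((t * ip : ℝ) : EReal) ≤ h mid := by
        have := hC mid
        rwa [hsub, real_inner_smul_right] at this
      have h2 := hstrong w hw wbar hwbar t ht0.le ht1.le
      have h3 : ((H + t * ip + (s / 2) * t * (1 - t) * d : ℝ) : EReal) ≤
          ((t * A + (1 - t) * H : ℝ) : EReal) := by
        calc ((H + t * ip + (s / 2) * t * (1 - t) * d : ℝ) : EReal)
            = (h wbar + ((t * ip : ℝ) : EReal)) +
              (((s / 2) * t * (1 - t) * d : ℝ) : EReal) := by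
              rw [hHeq, ← EReal.coe_add, ← EReal.coe_add]
          _ ≤ h mid + (((s / 2) * t * (1 - t) * ‖w - wbar‖ ^ 2 : ℝ) : EReal) := by
              rw [← hd]; exact add_le_add_left h1 _
          _ ≤ (t : EReal) * h w + ((1 - t : ℝ) : EReal) * h wbar := h2
          _ = ((t * A + (1 - t) * H : ℝ) : EReal) := by
              rw [hAeq, hHeq, ← EReal.coe_mul, ← EReal.coe_mul, ← EReal.coe_add]
      have h4 : H + t * ip + (s / 2) * t * (1 - t) * d ≤ t * A + (1 - t) * H :=
        EReal.coe_le_coe_iff.mp h3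
      nlinarith [mul_pos ht0 (sub_pos.mpr ht1)]
    -- take t → 0⁺
    have hlim : ip + (s / 2) * d ≤ A - H := by
      have hten : Filter.Tendsto (fun t : ℝ => ip + (s / 2) * (1 - t) * d)
          (nhdsWithin 0 (Set.Ioi 0)) (nhds (ip + (s / 2) * (1 - 0) * d)) := by
        apply Filter.Tendsto.mono_left _ nhdsWithin_le_nhds
        exact (Continuous.tendsto (by fun_prop) 0)
      have hev : ∀ᶠ t in nhdsWithin (0 : ℝ) (Set.Ioi 0),
          ip + (s / 2) * (1 - t) * d ≤ A - H := by
        filter_upwards [Ioo_mem_nhdsGT_of_mem (by norm_num : (0:ℝ) ∈ Set.Ico (0:ℝ) 1)]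
          with t ht using step t ht
      have := le_of_tendsto hten hev
      simpa using this
    have : ((H + ip + (s / 2) * d : ℝ) : EReal) ≤ ((A : ℝ) : EReal) := by
      exact_mod_cast by linarith
    rw [hAeq]; exact this
  -- growth inequality
  have growth : ∀ w ∈ W,
      f wbar - ((⟪zbar, wbar⟫ : ℝ) : EReal) + (((s / 2) * ‖w - wbar‖ ^ 2 : ℝ) : EReal) ≤
        f w - ((⟪zbar, w⟫ : ℝ) : EReal) := by
    intro w hw
    have h1 : ((H + ⟪zbar, w - wbar⟫ + (s / 2) * ‖w - wbar‖ ^ 2 : ℝ) : EReal) ≤ f w :=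
      (key w hw).trans (hle w hw)
    have h2 : ((H + ⟪zbar, w - wbar⟫ + (s / 2) * ‖w - wbar‖ ^ 2 - ⟪zbar, w⟫ : ℝ) : EReal) ≤
        f w - ((⟪zbar, w⟫ : ℝ) : EReal) := by
      rw [EReal.coe_sub]
      exact EReal.sub_le_sub h1 le_rfl
    have h3 : f wbar - ((⟪zbar, wbar⟫ : ℝ) : EReal) + (((s / 2) * ‖w - wbar‖ ^ 2 : ℝ) : EReal)
        = ((H + ⟪zbar, w - wbar⟫ + (s / 2) * ‖w - wbar‖ ^ 2 - ⟪zbar, w⟫ : ℝ) : EReal) := by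
      rw [hfval, hHeq, ← EReal.coe_sub, ← EReal.coe_add]
      congr 1
      rw [inner_sub_right]
      ring
    rw [h3]; exact h2
  refine ⟨⟨W, hWo.mem_nhds hwbar, fun w hw => ?_⟩, growth⟩
  have hge : f wbar - ((⟪zbar, wbar⟫ : ℝ) : EReal) ≤
      f wbar - ((⟪zbar, wbar⟫ : ℝ) : EReal) + (((s / 2) * ‖w - wbar‖ ^ 2 : ℝ) : EReal) := by
    have heq : f wbar - ((⟪zbar, wbar⟫ : ℝ) : EReal)
        = ((H - ⟪zbar, wbar⟫ : ℝ) : EReal) := by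
      rw [hfval, hHeq, ← EReal.coe_sub]
    rw [heq, ← EReal.coe_add, EReal.coe_le_coe_iff]
    nlinarith [sq_nonneg ‖w - wbar‖]
  exact hge.trans (growth w hw)
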